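/- Let (Ω, 𝓕, μ) be a probability space, T_rct, T_synth : Ω → Bool measurable, and Y : Ω → ℝ integrable. Suppose T_rct is independent of the pair ω ↦ (T_synth ω, Y ω) under μ and μ({ω | T_rct ω = true}) = 1/2. Then, with A = {ω | T_rct ω = T_synth ω}, the expectation of Y is preserved under conditioning on acceptance: ∫ Y d(ProbabilityTheory.cond μ A) = ∫ Y dμ. -/

import Mathlib

open MeasureTheory ProbabilityTheory

theorem integral_cond_acceptance_eq {Ω : Type*} [MeasurableSpace Ω]
    (μ : Measure Ω) [IsProbabilityMeasure μ]
    (Trct Tsynth : Ω → Bool) (Y : Ω → ℝ)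
    (hTrct : Measurable Trct) (hTsynth : Measurable Tsynth)
    (hY : Integrable Y μ)
    (hindep : IndepFun Trct (fun ω => (Tsynth ω, Y ω)) μ)
    (hbal : μ {ω | Trct ω = true} = 1/2) :
    ∫ ω, Y ω ∂(ProbabilityTheory.cond μ {ω | Trct ω = Tsynth ω}) = ∫ ω, Y ω ∂μ := by
  classical
  set A : Set Ω := {ω | Trct ω = Tsynth ω} with hA
  -- basic sets
  set T1 : Set Ω := Trct ⁻¹' {true} with hT1
  set T0 : Set Ω := Trct ⁻¹' {false} with hT0
  set S1 : Set Ω := Tsynth ⁻¹' {true} with hS1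
  set S0 : Set Ω := Tsynth ⁻¹' {false} with hS0
  have hT1m : MeasurableSet T1 := hTrct (measurableSet_singleton _)
  have hT0m : MeasurableSet T0 := hTrct (measurableSet_singleton _)
  have hS1m : MeasurableSet S1 := hTsynth (measurableSet_singleton _)
  have hS0m : MeasurableSet S0 := hTsynth (measurableSet_singleton _)
  -- balance for both values of Trct
  have hμT1 : μ T1 = 1/2 := by
    have : T1 = {ω | Trct ω = true} := by ext ω; simp [hT1]
    rw [this, hbal]
  have hT0c : T0 = T1ᶜ := by
    ext ω; cases h : Trct ω <;> simp [hT0, hT1, h]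
  have hμT0 : μ T0 = 1/2 := by
    rw [hT0c, measure_compl hT1m (measure_ne_top μ T1), hμT1, measure_univ,
      ENNReal.sub_half ENNReal.one_ne_top]
  have hS0c : S0 = S1ᶜ := by
    ext ω; cases h : Tsynth ω <;> simp [hS0, hS1, h]
  -- decomposition of A
  have hAeq : A = (T1 ∩ S1) ∪ (T0 ∩ S0) := by
    ext ω
    cases h1 : Trct ω <;> cases h2 : Tsynth ω <;>
      simp [hA, hT1, hT0, hS1, hS0, h1, h2]
  have hdisj : Disjoint (T1 ∩ S1) (T0 ∩ S0) := by
    apply Set.disjoint_left.2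
    rintro ω ⟨h1, _⟩ ⟨h2, _⟩
    simp only [hT1, hT0, Set.mem_preimage, Set.mem_singleton_iff] at h1 h2
    rw [h1] at h2; exact Bool.noConfusion h2
  have hAm : MeasurableSet A := by
    rw [hAeq]; exact (hT1m.inter hS1m).union (hT0m.inter hS0m)
  -- independence of Trct and Tsynth
  have hindepTS : IndepFun Trct Tsynth μ := by
    have := hindep.comp measurable_id (measurable_fst : Measurable (Prod.fst : Bool × ℝ → Bool))
    exact this
  -- measure of A
  have hμA : μ A = 1/2 := by
    have h1 : μ (T1 ∩ S1) = μ T1 * μ S1 :=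
      hindepTS.measure_inter_preimage_eq_mul _ _ (measurableSet_singleton _)
        (measurableSet_singleton _)
    have h0 : μ (T0 ∩ S0) = μ T0 * μ S0 :=
      hindepTS.measure_inter_preimage_eq_mul _ _ (measurableSet_singleton _)
        (measurableSet_singleton _)
    have hsum : μ S1 + μ S0 = 1 := by
      rw [hS0c, ← measure_univ (μ := μ)]
      exact measure_add_measure_compl hS1m
    rw [hAeq, measure_union hdisj (hT0m.inter hS0m), h1, h0, hμT1, hμT0,
      ← mul_add, hsum, mul_one]
  -- key set-integral factorization for each branch
  have key : ∀ b : Bool, ∫ ω in (Trct ⁻¹' {b}) ∩ (Tsynth ⁻¹' {b}), Y ω ∂μ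
      = (μ (Trct ⁻¹' {b})).toReal * ∫ ω in Tsynth ⁻¹' {b}, Y ω ∂μ := by
    intro b
    set φ : Bool → ℝ := fun c => if c = b then 1 else 0 with hφdef
    set ψ : Bool × ℝ → ℝ := fun p => if p.1 = b then p.2 else 0 with hψdef
    have hφm : Measurable φ := measurable_of_countable _
    have hψm : Measurable ψ := by
      apply Measurable.ite _ measurable_snd measurable_const
      exact (measurable_fst (measurableSet_singleton b))
    have hprod : (fun ω => φ (Trct ω) * ψ (Tsynth ω, Y ω))
        = Set.indicator ((Trct ⁻¹' {b}) ∩ (Tsynth ⁻¹' {b})) Y := by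
      funext ω
      by_cases h1 : Trct ω = b <;> by_cases h2 : Tsynth ω = b <;>
        simp [hφdef, hψdef, h1, h2, Set.indicator_apply]
    have hψeq : (fun ω => ψ (Tsynth ω, Y ω)) = Set.indicator (Tsynth ⁻¹' {b}) Y := by
      funext ω
      by_cases h2 : Tsynth ω = b <;> simp [hψdef, h2, Set.indicator_apply]
    have hφeq : (fun ω => φ (Trct ω)) = Set.indicator (Trct ⁻¹' {b}) (fun _ => (1:ℝ)) := by
      funext ω
      by_cases h1 : Trct ω = b <;> simp [hφdef, h1, Set.indicator_apply]
    have hindb : IndepFun (φ ∘ Trct) (ψ ∘ fun ω => (Tsynth ω, Y ω)) μ :=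
      hindep.comp hφm hψm
    have hφsm : AEStronglyMeasurable (φ ∘ Trct) μ :=
      ((hφm.comp hTrct).aestronglyMeasurable)
    have hψsm : AEStronglyMeasurable (ψ ∘ fun ω => (Tsynth ω, Y ω)) μ := by
      have : (ψ ∘ fun ω => (Tsynth ω, Y ω)) = Set.indicator (Tsynth ⁻¹' {b}) Y := hψeq
      rw [this]
      exact hY.aestronglyMeasurable.indicator (hTsynth (measurableSet_singleton b))
    have hmul := hindb.integral_fun_mul_eq_mul_integral hφsm hψsm
    have e1 : (∫ ω, (φ ∘ Trct) ω * (ψ ∘ fun ω => (Tsynth ω, Y ω)) ω ∂μ)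
        = ∫ ω in (Trct ⁻¹' {b}) ∩ (Tsynth ⁻¹' {b}), Y ω ∂μ := by
      rw [← integral_indicator ((hTrct (measurableSet_singleton b)).inter
        (hTsynth (measurableSet_singleton b)))]
      congr 1
    have e2 : (∫ ω, (φ ∘ Trct) ω ∂μ) = (μ (Trct ⁻¹' {b})).toReal := by
      have : (φ ∘ Trct) = Set.indicator (Trct ⁻¹' {b}) (fun _ => (1:ℝ)) := hφeq
      rw [this, integral_indicator_const _ (hTrct (measurableSet_singleton b))]
      simp [Measure.real]
    have e3 : (∫ ω, (ψ ∘ fun ω => (Tsynth ω, Y ω)) ω ∂μ)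
        = ∫ ω in Tsynth ⁻¹' {b}, Y ω ∂μ := by
      rw [show (ψ ∘ fun ω => (Tsynth ω, Y ω)) = Set.indicator (Tsynth ⁻¹' {b}) Y from hψeq,
        integral_indicator (hTsynth (measurableSet_singleton b))]
    rw [← e1, hmul, e2, e3]
  -- the set integral over A
  have hintA : ∫ ω in A, Y ω ∂μ = (1/2) * ∫ ω, Y ω ∂μ := by
    rw [hAeq, setIntegral_union hdisj (hT0m.inter hS0m)
      (hY.integrableOn) (hY.integrableOn), key true, key false]
    have h1 : (μ (Trct ⁻¹' {true})).toReal = 1/2 := by rw [← hT1, hμT1]; simp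
    have h0 : (μ (Trct ⁻¹' {false})).toReal = 1/2 := by rw [← hT0, hμT0]; simp
    rw [h1, h0, ← mul_add]
    congr 1
    have := integral_add_compl hS1m hY
    rw [← hS0c] at this
    exact this
  -- conclude
  rw [hA] at hAm hμA hintA ⊢
  unfold ProbabilityTheory.cond
  rw [integral_smul_measure, hμA, hintA]
  simp [ENNReal.toReal_inv]
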